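/- For λ ∈ (0,1) and 0 < Re(z) < 1/λ, 1/Γ_λ(z) = λ^z z (1/λ − z) Γ(1/λ) · ∏_{n=1}^∞ [ (1 + 1/n)^{-1/λ} (1 + z/n)(1 + (1/λ − z)/n) ], where the infinite product converges. -/

import Mathlib

open MeasureTheory Complex Filter

/-- Degenerate gamma function via the gamma-quotient formula. -/
noncomputable def degGamma (l : ℝ) (s : ℂ) : ℂ :=
  (l : ℂ) ^ (-s) * Complex.Gamma s * Complex.Gamma (1 / l - s) / Complex.Gamma (1 / l)

lemma aux_prod_cpow (s : ℂ) (r : ℕ → ℝ) (hr : ∀ n, 0 ≤ r n) (N : ℕ) :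
    ∏ n ∈ Finset.range N, ((r n : ℂ)) ^ s
      = (((∏ n ∈ Finset.range N, r n : ℝ)) : ℂ) ^ s := by
  induction N with
  | zero => simp
  | succ N ih =>
      rw [Finset.prod_range_succ, Finset.prod_range_succ, ih,
        ← Complex.mul_cpow_ofReal_nonneg (Finset.prod_nonneg fun i _ => hr i) (hr N),
        Complex.ofReal_mul]

lemma aux_telescope (N : ℕ) :
    ∏ n ∈ Finset.range N, (1 + 1 / ((n : ℝ) + 1)) = (N : ℝ) + 1 := by
  induction N with
  | zero => simp
  | succ N ih =>
      rw [Finset.prod_range_succ, ih]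
      have h : (N : ℝ) + 1 ≠ 0 := by positivity
      field_simp
      push_cast; ring

lemma aux_ne_zero {s : ℂ} (hs : 0 < s.re) (n : ℕ) : (1 + s / ((n : ℂ) + 1)) ≠ 0 := by
  have h1 : ((n : ℂ) + 1) = ((n + 1 : ℝ) : ℂ) := by push_cast; ring
  have hpos : 0 < (1 + s / ((n : ℂ) + 1)).re := by
    rw [h1, Complex.add_re, Complex.div_ofReal_re]
    have h2 : 0 < s.re / ((n : ℝ) + 1) := by positivity
    have h3 : (1 : ℂ).re = 1 := Complex.one_re
    rw [h3]; linarith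
  intro h
  rw [h] at hpos
  simp at hpos

lemma aux_Gamma_ne_zero {s : ℂ} (hs : 0 < s.re) : Complex.Gamma s ≠ 0 := by
  apply Complex.Gamma_ne_zero
  intro m h
  rw [h] at hs
  simp at hs
  have : (0:ℝ) ≤ m := Nat.cast_nonneg m
  linarith

lemma aux_prod_eq (s : ℂ) (N : ℕ) :
    (∏ n ∈ Finset.range N, (1 + s / ((n : ℂ) + 1))) * (N.factorial : ℂ)
      = ∏ n ∈ Finset.range N, (s + ((n : ℂ) + 1)) := by
  have h : (N.factorial : ℂ) = ∏ n ∈ Finset.range N, ((n : ℂ) + 1) := by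
    rw [← Finset.prod_range_add_one_eq_factorial N]
    push_cast
    rfl
  rw [h, ← Finset.prod_mul_distrib]
  apply Finset.prod_congr rfl
  intro n _
  have hn : ((n : ℂ) + 1) ≠ 0 := Nat.cast_add_one_ne_zero n
  field_simp
  ring

lemma aux_tendsto_inv_one (s : ℂ) :
    Tendsto (fun N : ℕ => (1 + s / ((N : ℂ) + 1))) atTop (nhds 1) := by
  have h1 : Tendsto (fun N : ℕ => ((1 / ((N:ℝ) + 1) : ℝ) : ℂ)) atTop (nhds 0) := by
    rw [show ((0:ℂ)) = ((0:ℝ):ℂ) by simp]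
    exact (Complex.continuous_ofReal.tendsto 0).comp tendsto_one_div_add_atTop_nhds_zero_nat
  have h : Tendsto (fun N : ℕ => s / ((N : ℂ) + 1)) atTop (nhds 0) := by
    have heq : (fun N : ℕ => s / ((N : ℂ) + 1))
        = fun N : ℕ => s * ((1 / ((N:ℝ) + 1) : ℝ) : ℂ) := by
      funext N; push_cast; ring
    rw [heq]
    simpa using (tendsto_const_nhds.mul h1)
  simpa using (tendsto_const_nhds.add h)

lemma aux_key (s : ℂ) (N : ℕ) :
    (Complex.GammaSeq s (N + 1))⁻¹
      = (s * ((N : ℂ) + 1) ^ (-s) * ∏ n ∈ Finset.range N, (1 + s / ((n : ℂ) + 1)))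
          * (1 + s / ((N : ℂ) + 1)) := by
  have hb : ((N : ℂ) + 1) ≠ 0 := Nat.cast_add_one_ne_zero N
  have hfac : (((N+1).factorial : ℕ) : ℂ) ≠ 0 := by
    exact_mod_cast Nat.factorial_ne_zero (N+1)
  have hpow : ((N : ℂ) + 1) ^ s ≠ 0 := by
    simp [Complex.cpow_eq_zero_iff, hb]
  have hsplit : ∏ j ∈ Finset.range (N + 1 + 1), (s + (j:ℂ))
      = s * ∏ n ∈ Finset.range (N + 1), (s + ((n:ℂ) + 1)) := by
    rw [Finset.prod_range_succ']
    push_cast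
    ring
  have hQ := aux_prod_eq s (N + 1)
  rw [Complex.GammaSeq, hsplit, ← hQ, Complex.cpow_neg,
    Finset.prod_range_succ]
  have hcast : ((N + 1 : ℕ) : ℂ) = (N : ℂ) + 1 := by push_cast; ring
  rw [hcast]
  field_simp

lemma aux_tendsto_P {s : ℂ} (hs : 0 < s.re) :
    Tendsto (fun N : ℕ =>
        s * ((N : ℂ) + 1) ^ (-s) * ∏ n ∈ Finset.range N, (1 + s / ((n : ℂ) + 1)))
      atTop (nhds (Complex.Gamma s)⁻¹) := by
  have hΓ := aux_Gamma_ne_zero hs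
  have h1 : Tendsto (fun N : ℕ => (Complex.GammaSeq s (N + 1))⁻¹) atTop
      (nhds (Complex.Gamma s)⁻¹) :=
    ((Complex.GammaSeq_tendsto_Gamma s).comp (tendsto_add_atTop_nat 1)).inv₀ hΓ
  have h2 := h1.mul ((aux_tendsto_inv_one s).inv₀ one_ne_zero)
  simp only [inv_one, mul_one] at h2
  apply h2.congr
  intro N
  rw [aux_key s N, mul_inv_cancel_right₀ (aux_ne_zero hs N)]

theorem degGamma_weierstrass' (l : ℝ) (hl : l ∈ Set.Ioo (0 : ℝ) 1)
    (z : ℂ) (hz : 0 < z.re) (hz' : z.re < 1 / l) :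
    Tendsto (fun N : ℕ =>
        (l : ℂ) ^ z * z * ((1 / l : ℂ) - z) * Complex.Gamma (1 / l) *
          ∏ n ∈ Finset.range N,
            (1 + 1 / ((n : ℂ) + 1)) ^ (-(1 / l : ℂ)) * (1 + z / (n + 1)) *
              (1 + ((1 / l : ℂ) - z) / (n + 1)))
      atTop (nhds (1 / degGamma l z)) := by
  obtain ⟨hl0, hl1⟩ := hl
  set w : ℂ := (1 / (l : ℂ)) - z with hwdef
  have hone : (1 / (l : ℂ)) = ((1 / l : ℝ) : ℂ) := by push_cast; ring
  have hlre : (1 / (l : ℂ)).re = 1 / l := by rw [hone, Complex.ofReal_re]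
  have hw : 0 < w.re := by
    rw [hwdef, Complex.sub_re, hlre]
    linarith
  have hlpos : 0 < 1 / l := by positivity
  have hlre2 : 0 < (1 / (l : ℂ)).re := by rw [hlre]; exact hlpos
  have hzw : z + w = 1 / (l : ℂ) := by rw [hwdef]; ring
  have hΓz := aux_Gamma_ne_zero hz
  have hΓw := aux_Gamma_ne_zero hw
  have hΓl := aux_Gamma_ne_zero hlre2
  have hlc : (l : ℂ) ≠ 0 := by
    exact_mod_cast ne_of_gt hl0
  have hlzc : (l : ℂ) ^ z ≠ 0 := by simp [Complex.cpow_eq_zero_iff, hlc]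
  set C : ℂ := (l : ℂ) ^ z * Complex.Gamma (1 / (l : ℂ)) with hCdef
  have heq : ∀ N : ℕ,
      (l : ℂ) ^ z * z * w * Complex.Gamma (1 / (l:ℂ)) *
          ∏ n ∈ Finset.range N,
            (1 + 1 / ((n : ℂ) + 1)) ^ (-(1 / (l:ℂ))) * (1 + z / ((n:ℂ) + 1)) *
              (1 + w / ((n:ℂ) + 1))
        = C * (z * ((N : ℂ) + 1) ^ (-z) * ∏ n ∈ Finset.range N, (1 + z / ((n : ℂ) + 1)))
            * (w * ((N : ℂ) + 1) ^ (-w) * ∏ n ∈ Finset.range N, (1 + w / ((n : ℂ) + 1))) := by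
    intro N
    have hb : ((N : ℂ) + 1) ≠ 0 := Nat.cast_add_one_ne_zero N
    have hA : ∏ n ∈ Finset.range N, (1 + 1 / ((n : ℂ) + 1)) ^ (-(1 / (l:ℂ)))
        = ((N : ℂ) + 1) ^ (-z) * ((N : ℂ) + 1) ^ (-w) := by
      have h1 : ∀ n : ℕ, (1 + 1 / ((n : ℂ) + 1)) = (((1 + 1 / ((n : ℝ) + 1)) : ℝ) : ℂ) := by
        intro n; push_cast; ring
      calc ∏ n ∈ Finset.range N, (1 + 1 / ((n : ℂ) + 1)) ^ (-(1 / (l:ℂ)))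
          = ∏ n ∈ Finset.range N, ((((1 + 1 / ((n : ℝ) + 1)) : ℝ) : ℂ)) ^ (-(1 / (l:ℂ))) := by
            exact Finset.prod_congr rfl fun n _ => by rw [h1 n]
        _ = (((∏ n ∈ Finset.range N, (1 + 1 / ((n : ℝ) + 1)) : ℝ)) : ℂ) ^ (-(1 / (l:ℂ))) :=
            aux_prod_cpow _ _ (fun n => by positivity) N
        _ = ((N : ℂ) + 1) ^ (-(z + w)) := by
              rw [aux_telescope, hzw]; norm_cast
        _ = ((N : ℂ) + 1) ^ (-z) * ((N : ℂ) + 1) ^ (-w) := by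
              rw [neg_add, Complex.cpow_add _ _ hb]
    rw [Finset.prod_mul_distrib, Finset.prod_mul_distrib, hA, hCdef]
    ring
  have hT := ((tendsto_const_nhds.mul (aux_tendsto_P hz)).mul (aux_tendsto_P hw) :
    Tendsto (fun N : ℕ =>
      C * (z * ((N : ℂ) + 1) ^ (-z) * ∏ n ∈ Finset.range N, (1 + z / ((n : ℂ) + 1)))
        * (w * ((N : ℂ) + 1) ^ (-w) * ∏ n ∈ Finset.range N, (1 + w / ((n : ℂ) + 1))))
      atTop (nhds (C * (Complex.Gamma z)⁻¹ * (Complex.Gamma w)⁻¹)))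
  have hval : C * (Complex.Gamma z)⁻¹ * (Complex.Gamma w)⁻¹ = 1 / degGamma l z := by
    rw [hCdef, degGamma, Complex.cpow_neg]
    rw [hwdef]
    field_simp
  rw [← hval]
  exact hT.congr fun N => (heq N).symm
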